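/- Let G = (V,E) be a graph and v ∈ V. Then D(G,x) = D(G−v, x) + ∑_{W : v ∈ W ⊆ V, G[W] connected} (x^{|W|} + (−1)^{|W|}) · D(G − N[W], x), where G−v is the induced subgraph on V∖{v} and G − N[W] is the induced subgraph on V ∖ N[W]. -/
import Mathlib


open Finset Polynomial

variable {V : Type*}

def dominates (H : SimpleGraph V) (W : Finset V) : Prop :=
  ∀ v : V, v ∈ W ∨ ∃ u ∈ W, H.Adj u v

open scoped Classical in
noncomputable def domPoly [Fintype V] (H : SimpleGraph V) : Polynomial ℤ :=
  ∑ W ∈ Finset.univ.powerset.filter (fun W => dominates H W), X ^ W.card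

open scoped Classical in
noncomputable def compOrders [Fintype V] (H : SimpleGraph V) : Multiset ℕ :=
  (Finset.univ : Finset H.ConnectedComponent).val.map (fun c => Nat.card c.supp)

open scoped Classical

namespace Stmt12Aux

variable {V : Type*} [Fintype V] [DecidableEq V] (G : SimpleGraph V) (v : V)

noncomputable def nbhd (W : Finset V) : Finset V :=
  Finset.univ.filter (fun x => x ∈ W ∨ ∃ u ∈ W, G.Adj u x)

lemma mem_nbhd {W : Finset V} {x : V} : x ∈ nbhd G W ↔ x ∈ W ∨ ∃ u ∈ W, G.Adj u x := by
  simp [nbhd]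

lemma subset_nbhd (W : Finset V) : W ⊆ nbhd G W := fun x hx => (mem_nbhd G).2 (Or.inl hx)

def step (T : Finset V) (a b : V) : Prop := G.Adj a b ∧ a ∈ T ∧ b ∈ T

noncomputable def comp (T : Finset V) : Finset V :=
  T.filter (fun u => Relation.ReflTransGen (step G T) v u)

lemma comp_subset (T : Finset V) : comp G v T ⊆ T := Finset.filter_subset _ _

lemma mem_comp {T : Finset V} {u : V} :
    u ∈ comp G v T ↔ u ∈ T ∧ Relation.ReflTransGen (step G T) v u := Finset.mem_filter

lemma self_mem_comp {T : Finset V} (hv : v ∈ T) : v ∈ comp G v T :=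
  (mem_comp G v).2 ⟨hv, Relation.ReflTransGen.refl⟩

lemma rtg_mono {T T' : Finset V} (h : T ⊆ T') {u : V}
    (hr : Relation.ReflTransGen (step G T) v u) : Relation.ReflTransGen (step G T') v u := by
  induction hr with
  | refl => exact Relation.ReflTransGen.refl
  | tail _ hbc ih => exact ih.tail ⟨hbc.1, h hbc.2.1, h hbc.2.2⟩

lemma reach_of_rtg {W : Finset V} (hv : v ∈ W) {u : V}
    (h : Relation.ReflTransGen (step G W) v u) (hu : u ∈ W) :
    (G.induce (↑W : Set V)).Reachable ⟨v, by simpa using hv⟩ ⟨u, by simpa using hu⟩ := by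
  induction h with
  | refl => exact SimpleGraph.Reachable.refl _
  | @tail b c hvb hbc ih =>
      exact (ih hbc.2.1).trans (SimpleGraph.Adj.reachable (by exact hbc.1))

lemma rtg_of_reach {W : Finset V} {a b : ↥(↑W : Set V)}
    (h : (G.induce (↑W : Set V)).Reachable a b) :
    Relation.ReflTransGen (step G W) ↑a ↑b := by
  obtain ⟨p⟩ := h
  induction p with
  | nil => exact Relation.ReflTransGen.refl
  | @cons x y z hxy p ih =>
      exact Relation.ReflTransGen.head ⟨hxy, Finset.mem_coe.mp x.2, Finset.mem_coe.mp y.2⟩ ih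

lemma connected_iff {W : Finset V} (hv : v ∈ W) :
    (G.induce (↑W : Set V)).Connected ↔ ∀ u ∈ W, Relation.ReflTransGen (step G W) v u := by
  constructor
  · intro hc u hu
    exact rtg_of_reach G (hc.preconnected ⟨v, by simpa using hv⟩ ⟨u, by simpa using hu⟩)
  · intro h
    rw [SimpleGraph.connected_iff]
    refine ⟨fun a b => ?_, ⟨⟨v, by simpa using hv⟩⟩⟩
    have ha := reach_of_rtg G v hv (h a (by simpa using a.2)) (by simpa using a.2)
    have hb := reach_of_rtg G v hv (h b (by simpa using b.2)) (by simpa using b.2)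
    exact ha.symm.trans hb

end Stmt12Aux

namespace Stmt12Aux
variable {V : Type*} [Fintype V] [DecidableEq V] (G : SimpleGraph V) (v : V)

lemma comp_union {W S : Finset V} (hv : v ∈ W) (hc : (G.induce (↑W : Set V)).Connected)
    (hS : ∀ x ∈ S, x ∉ nbhd G W) : comp G v (W ∪ S) = W := by
  apply Finset.Subset.antisymm
  · intro u hu
    obtain ⟨-, hr⟩ := (mem_comp G v).1 hu
    clear hu
    induction hr with
    | refl => exact hv
    | @tail b c hvb hbc ih =>
        have hb : b ∈ W := ih
        rcases Finset.mem_union.1 hbc.2.2 with h | h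
        · exact h
        · exact absurd ((mem_nbhd G).2 (Or.inr ⟨b, hb, hbc.1⟩)) (hS c h)
  · intro u hu
    exact (mem_comp G v).2 ⟨Finset.mem_union_left _ hu,
      rtg_mono G v Finset.subset_union_left (((connected_iff G v hv).1 hc) u hu)⟩

lemma rtg_comp {T : Finset V} {u : V} (h : Relation.ReflTransGen (step G T) v u) :
    Relation.ReflTransGen (step G (comp G v T)) v u := by
  induction h with
  | refl => exact Relation.ReflTransGen.refl
  | @tail b c hvb hbc ih =>
      exact ih.tail ⟨hbc.1, (mem_comp G v).2 ⟨hbc.2.1, hvb⟩,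
        (mem_comp G v).2 ⟨hbc.2.2, hvb.tail hbc⟩⟩

lemma comp_connected {T : Finset V} (hv : v ∈ T) :
    (G.induce (↑(comp G v T) : Set V)).Connected := by
  rw [connected_iff G v (self_mem_comp G v hv)]
  intro u hu
  exact rtg_comp G v ((mem_comp G v).1 hu).2

lemma sdiff_comp_nbhd {T : Finset V} {x : V} (hx : x ∈ T \ comp G v T) :
    x ∉ nbhd G (comp G v T) := by
  obtain ⟨hxT, hxc⟩ := Finset.mem_sdiff.1 hx
  intro hmem
  rcases (mem_nbhd G).1 hmem with h | ⟨u, hu, hadj⟩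
  · exact hxc h
  · obtain ⟨-, hr⟩ := (mem_comp G v).1 hu
    exact hxc ((mem_comp G v).2 ⟨hxT, hr.tail ⟨hadj, (comp_subset G v T) hu, hxT⟩⟩)

lemma disj_of_nbhd {W S : Finset V} (hS : ∀ x ∈ S, x ∉ nbhd G W) : Disjoint W S :=
  Finset.disjoint_left.2 fun a haW haS => (hS a haS) (subset_nbhd G W haW)

lemma sum_pair (U : Finset V) (f : Finset V → Finset V → Polynomial ℤ) :
    ∑ W ∈ U.powerset.filter (fun W : Finset V => v ∈ W ∧ (G.induce (↑W : Set V)).Connected),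
      ∑ S ∈ (U \ nbhd G W).powerset, f W S
    = ∑ T ∈ U.powerset.filter (fun T => v ∈ T), f (comp G v T) (T \ comp G v T) := by
  rw [Finset.sum_sigma']
  refine Finset.sum_bij' (fun p _ => p.1 ∪ p.2) (fun T _ => ⟨comp G v T, T \ comp G v T⟩)
    ?_ ?_ ?_ ?_ ?_
  · rintro ⟨W, S⟩ hp
    rw [Finset.mem_sigma, Finset.mem_filter, Finset.mem_powerset] at hp
    obtain ⟨⟨hWU, hvW, -⟩, hS⟩ := hp
    rw [Finset.mem_powerset] at hS
    refine Finset.mem_filter.2 ⟨Finset.mem_powerset.2 ?_, Finset.mem_union_left _ hvW⟩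
    exact Finset.union_subset hWU (hS.trans (Finset.sdiff_subset))
  · intro T hT
    rw [Finset.mem_filter, Finset.mem_powerset] at hT
    obtain ⟨hTU, hvT⟩ := hT
    refine Finset.mem_sigma.2 ⟨Finset.mem_filter.2 ⟨Finset.mem_powerset.2
      ((comp_subset G v T).trans hTU), self_mem_comp G v hvT, comp_connected G v hvT⟩, ?_⟩
    refine Finset.mem_powerset.2 fun x hx => Finset.mem_sdiff.2
      ⟨hTU (Finset.mem_sdiff.1 hx).1, sdiff_comp_nbhd G v hx⟩
  · rintro ⟨W, S⟩ hp
    rw [Finset.mem_sigma, Finset.mem_filter, Finset.mem_powerset] at hp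
    obtain ⟨⟨hWU, hvW, hconn⟩, hS⟩ := hp
    rw [Finset.mem_powerset] at hS
    have hSn : ∀ x ∈ S, x ∉ nbhd G W := fun x hx => (Finset.mem_sdiff.1 (hS hx)).2
    have h1 : comp G v (W ∪ S) = W := comp_union G v hvW hconn hSn
    have h2 : (W ∪ S) \ W = S := Finset.union_sdiff_cancel_left (disj_of_nbhd G hSn)
    simp only [h1, h2]
  · intro T hT
    exact Finset.union_sdiff_of_subset (comp_subset G v T)
  · rintro ⟨W, S⟩ hp
    rw [Finset.mem_sigma, Finset.mem_filter, Finset.mem_powerset] at hp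
    obtain ⟨⟨hWU, hvW, hconn⟩, hS⟩ := hp
    rw [Finset.mem_powerset] at hS
    have hSn : ∀ x ∈ S, x ∉ nbhd G W := fun x hx => (Finset.mem_sdiff.1 (hS hx)).2
    have h1 : comp G v (W ∪ S) = W := comp_union G v hvW hconn hSn
    have h2 : (W ∪ S) \ W = S := Finset.union_sdiff_cancel_left (disj_of_nbhd G hSn)
    rw [h1, h2]

end Stmt12Aux

namespace Stmt12Aux
variable {V : Type*} [Fintype V] [DecidableEq V] (G : SimpleGraph V) (v : V)

lemma sum_pow_neg_one (A : Finset V) :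
    ∑ R ∈ A.powerset, (-1 : Polynomial ℤ) ^ R.card = if A = ∅ then 1 else 0 := by
  have h := Finset.sum_powerset_neg_one_pow_card (x := A)
  have h2 := congrArg (fun z : ℤ => (Polynomial.C z : Polynomial ℤ)) h
  simpa [map_sum, apply_ite] using h2

lemma sum_insert_erase (A : Finset V) (hv : v ∈ A) :
    ∑ T ∈ A.powerset.filter (fun T => v ∈ T), (-1 : Polynomial ℤ) ^ T.card
      = -∑ R ∈ (A.erase v).powerset, (-1 : Polynomial ℤ) ^ R.card := by
  rw [← Finset.sum_neg_distrib]
  refine Finset.sum_bij' (fun T _ => T.erase v) (fun R _ => insert v R) ?_ ?_ ?_ ?_ ?_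
  · intro T hT
    rw [Finset.mem_filter, Finset.mem_powerset] at hT
    exact Finset.mem_powerset.2 (Finset.erase_subset_erase v hT.1)
  · intro R hR
    rw [Finset.mem_powerset] at hR
    refine Finset.mem_filter.2 ⟨Finset.mem_powerset.2 ?_, Finset.mem_insert_self _ _⟩
    exact Finset.insert_subset hv (hR.trans (Finset.erase_subset _ _))
  · intro T hT
    rw [Finset.mem_filter] at hT
    exact Finset.insert_erase hT.2
  · intro R hR
    rw [Finset.mem_powerset] at hR
    exact Finset.erase_insert (fun hvR => (Finset.mem_erase.1 (hR hvR)).1 rfl)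
  · intro T hT
    rw [Finset.mem_filter] at hT
    have hc : T.card = (T.erase v).card + 1 := by
      rw [Finset.card_erase_of_mem hT.2]
      have := Finset.card_pos.2 ⟨v, hT.2⟩
      omega
    rw [hc, pow_succ]
    ring

lemma key (A : Finset V) :
    ∑ W ∈ A.powerset.filter (fun W : Finset V =>
        v ∈ W ∧ (G.induce (↑W : Set V)).Connected ∧ A ⊆ nbhd G W),
      (-1 : Polynomial ℤ) ^ W.card
    = if A = {v} then -1 else 0 := by
  by_cases hvA : v ∈ A
  · have e1 : ∑ W ∈ A.powerset.filter (fun W : Finset V =>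
        v ∈ W ∧ (G.induce (↑W : Set V)).Connected ∧ A ⊆ nbhd G W),
          (-1 : Polynomial ℤ) ^ W.card
        = ∑ W ∈ A.powerset.filter (fun W : Finset V =>
            v ∈ W ∧ (G.induce (↑W : Set V)).Connected),
            ∑ R ∈ (A \ nbhd G W).powerset, (-1 : Polynomial ℤ) ^ W.card * (-1) ^ R.card := by
      have hrw : ∀ W : Finset V,
          ∑ R ∈ (A \ nbhd G W).powerset, (-1 : Polynomial ℤ) ^ W.card * (-1) ^ R.card
            = if A ⊆ nbhd G W then (-1 : Polynomial ℤ) ^ W.card else 0 := by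
        intro W
        rw [← Finset.mul_sum, sum_pow_neg_one]
        by_cases h : A ⊆ nbhd G W
        · rw [if_pos (Finset.sdiff_eq_empty_iff_subset.2 h), if_pos h]; ring
        · rw [if_neg (fun he => h (Finset.sdiff_eq_empty_iff_subset.1 he)), if_neg h]; ring
      simp only [hrw]
      rw [← Finset.sum_filter, Finset.filter_filter]
      refine Finset.sum_congr (Finset.filter_congr fun W _ => ?_) (fun _ _ => rfl)
      tauto
    rw [e1, sum_pair G v A (fun W R => (-1 : Polynomial ℤ) ^ W.card * (-1) ^ R.card)]
    have e2 : ∀ T ∈ A.powerset.filter (fun T => v ∈ T),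
        (-1 : Polynomial ℤ) ^ (comp G v T).card * (-1) ^ (T \ comp G v T).card
          = (-1 : Polynomial ℤ) ^ T.card := by
      intro T hT
      have hcc := Finset.card_sdiff_add_card_eq_card (comp_subset G v T)
      rw [← pow_add]
      congr 1
      omega
    rw [Finset.sum_congr rfl e2, sum_insert_erase v A hvA, sum_pow_neg_one]
    have hiff : A.erase v = ∅ ↔ A = {v} := by
      rw [Finset.erase_eq_empty_iff]
      constructor
      · rintro (h | h)
        · exact absurd (h ▸ hvA) (Finset.notMem_empty v)
        · exact h
      · exact Or.inr
    by_cases h : A = {v}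
    · rw [if_pos (hiff.2 h), if_pos h]
    · rw [if_neg (fun he => h (hiff.1 he)), if_neg h]; ring
  · rw [if_neg (fun h : A = {v} => hvA (by rw [h]; exact Finset.mem_singleton_self v))]
    apply Finset.sum_eq_zero
    intro W hW
    rw [Finset.mem_filter, Finset.mem_powerset] at hW
    exact absurd (hW.1 hW.2.1) hvA

end Stmt12Aux

namespace Stmt12Aux
variable {V : Type*} [Fintype V] [DecidableEq V] (G : SimpleGraph V) (v : V)

lemma domPoly_induce (s : Set V) [Fintype ↥s] (B : Finset V) (hB : ∀ x, x ∈ B ↔ x ∈ s) :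
    domPoly (G.induce s)
      = ∑ T ∈ B.powerset.filter (fun T => ∀ x ∈ B, x ∈ T ∨ ∃ u ∈ T, G.Adj u x), X ^ T.card := by
  unfold domPoly dominates
  refine Finset.sum_bij' (fun (W : Finset ↥s) _ => W.map (Function.Embedding.subtype _))
    (fun T _ => T.subtype (· ∈ s)) ?_ ?_ ?_ ?_ ?_
  · intro W hW
    simp only [Finset.mem_filter] at hW
    simp only [Finset.mem_filter, Finset.mem_powerset]
    refine ⟨?_, ?_⟩
    · intro x hx
      rw [Finset.mem_map] at hx
      obtain ⟨y, -, rfl⟩ := hx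
      exact (hB _).2 y.2
    · intro x hxB
      rcases hW.2 ⟨x, (hB x).1 hxB⟩ with h | ⟨u, hu, hadj⟩
      · exact Or.inl (Finset.mem_map_of_mem _ h)
      · exact Or.inr ⟨↑u, Finset.mem_map_of_mem _ hu, hadj⟩
  · intro T hT
    simp only [Finset.mem_filter, Finset.mem_powerset] at hT
    simp only [Finset.mem_filter, Finset.mem_powerset]
    refine ⟨Finset.subset_univ _, ?_⟩
    intro x
    rcases hT.2 ↑x ((hB _).2 x.2) with h | ⟨u, hu, hadj⟩
    · exact Or.inl (Finset.mem_subtype.2 h)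
    · exact Or.inr ⟨⟨u, (hB u).1 (hT.1 hu)⟩, Finset.mem_subtype.2 hu, hadj⟩
  · intro W _
    ext x
    simp [Finset.mem_subtype]
  · intro T hT
    simp only [Finset.mem_filter, Finset.mem_powerset] at hT
    show (Finset.subtype (· ∈ s) T).map (Function.Embedding.subtype _) = T
    rw [Finset.subtype_map]
    exact Finset.filter_true_of_mem (fun x hx => (hB x).1 (hT.1 hx))
  · intro W _
    rw [Finset.card_map]

lemma dom_split {T : Finset V} (hv : v ∈ T) :
    dominates G T ↔ ∀ x ∈ Finset.univ \ nbhd G (comp G v T),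
      x ∈ T \ comp G v T ∨ ∃ u ∈ T \ comp G v T, G.Adj u x := by
  constructor
  · intro hd x hx
    have hxn : x ∉ nbhd G (comp G v T) := (Finset.mem_sdiff.1 hx).2
    rcases hd x with h | ⟨u, hu, hadj⟩
    · refine Or.inl (Finset.mem_sdiff.2 ⟨h, fun hc => hxn (subset_nbhd G _ hc)⟩)
    · by_cases huc : u ∈ comp G v T
      · exact absurd ((mem_nbhd G).2 (Or.inr ⟨u, huc, hadj⟩)) hxn
      · exact Or.inr ⟨u, Finset.mem_sdiff.2 ⟨hu, huc⟩, hadj⟩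
  · intro hd x
    by_cases hx : x ∈ nbhd G (comp G v T)
    · rcases (mem_nbhd G).1 hx with h | ⟨u, hu, hadj⟩
      · exact Or.inl (comp_subset G v T h)
      · exact Or.inr ⟨u, comp_subset G v T hu, hadj⟩
    · rcases hd x (Finset.mem_sdiff.2 ⟨Finset.mem_univ x, hx⟩) with h | ⟨u, hu, hadj⟩
      · exact Or.inl (Finset.mem_sdiff.1 h).1
      · exact Or.inr ⟨u, (Finset.mem_sdiff.1 hu).1, hadj⟩

end Stmt12Aux

namespace Stmt12Aux
variable {V : Type*} [Fintype V] [DecidableEq V] (G : SimpleGraph V) (v : V)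

lemma sum_powerset_extend (A : Finset V) (p : Finset V → Prop) [DecidablePred p]
    (f : Finset V → Polynomial ℤ) :
    ∑ S ∈ A.powerset.filter p, f S
      = ∑ S ∈ (Finset.univ : Finset V).powerset, if S ⊆ A ∧ p S then f S else 0 := by
  have h1 : ∑ S ∈ A.powerset, (if p S then f S else 0)
      = ∑ S ∈ A.powerset, (if S ⊆ A ∧ p S then f S else 0) :=
    Finset.sum_congr rfl fun S hS => by
      rw [Finset.mem_powerset] at hS
      by_cases hp : p S
      · rw [if_pos hp, if_pos ⟨hS, hp⟩]
      · rw [if_neg hp, if_neg (fun h => hp h.2)]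
  rw [Finset.sum_filter, h1]
  apply Finset.sum_subset (Finset.powerset_mono.2 (Finset.subset_univ A))
  intro S _ hS
  rw [Finset.mem_powerset] at hS
  exact if_neg (fun h => hS h.1)

lemma cond_subset_aux {W S : Finset V} (h : S ⊆ Finset.univ \ nbhd G W) :
    W ⊆ Finset.univ \ nbhd G S := by
  intro w hw
  refine Finset.mem_sdiff.2 ⟨Finset.mem_univ w, fun hwn => ?_⟩
  rcases (mem_nbhd G).1 hwn with hws | ⟨u, hu, hadj⟩
  · exact (Finset.mem_sdiff.1 (h hws)).2 (subset_nbhd G W hw)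
  · exact (Finset.mem_sdiff.1 (h hu)).2 ((mem_nbhd G).2 (Or.inr ⟨w, hw, hadj.symm⟩))

lemma cond_dom_iff {W S : Finset V} :
    (∀ x ∈ Finset.univ \ nbhd G W, x ∈ S ∨ ∃ u ∈ S, G.Adj u x)
      ↔ Finset.univ \ nbhd G S ⊆ nbhd G W := by
  constructor
  · intro hd x hx
    by_contra hxn
    have hmem : x ∈ Finset.univ \ nbhd G W := Finset.mem_sdiff.2 ⟨Finset.mem_univ x, hxn⟩
    exact (Finset.mem_sdiff.1 hx).2 ((mem_nbhd G).2 (hd x hmem))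
  · intro h x hx
    by_cases hxs : x ∈ nbhd G S
    · exact (mem_nbhd G).1 hxs
    · exact absurd (h (Finset.mem_sdiff.2 ⟨Finset.mem_univ x, hxs⟩)) (Finset.mem_sdiff.1 hx).2

end Stmt12Aux

open Stmt12Aux in
open scoped Classical in
/-- recursion
`D(G,x) = D(G-v,x) + ∑_{v ∈ W, G[W] connected} (x^|W| + (-1)^|W|) D(G - N[W], x)`. -/
theorem stmt_12 [Fintype V] [DecidableEq V] (G : SimpleGraph V) (v : V) :
    domPoly G
      = domPoly (G.induce {u : V | u ≠ v})
        + ∑ W ∈ (Finset.univ : Finset V).powerset.filter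
            (fun W : Finset V => v ∈ W ∧ (G.induce (↑W : Set V)).Connected),
            ((X : Polynomial ℤ) ^ W.card + (-1) ^ W.card) *
              domPoly (G.induce {x : V | ¬ (x ∈ W ∨ ∃ u ∈ W, G.Adj u x)}) := by
  classical
  have hDW : ∀ W : Finset V,
      domPoly (G.induce {x : V | ¬ (x ∈ W ∨ ∃ u ∈ W, G.Adj u x)})
        = ∑ S ∈ (Finset.univ \ nbhd G W).powerset.filter
            (fun S => ∀ x ∈ Finset.univ \ nbhd G W, x ∈ S ∨ ∃ u ∈ S, G.Adj u x),
            (X : Polynomial ℤ) ^ S.card := by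
    intro W
    refine domPoly_induce G _ _ (fun x => ?_)
    simp [nbhd]
  have hGv : domPoly (G.induce {u : V | u ≠ v})
      = ∑ T ∈ (Finset.univ.erase v).powerset.filter
          (fun T => ∀ x ∈ Finset.univ.erase v, x ∈ T ∨ ∃ u ∈ T, G.Adj u x),
          (X : Polynomial ℤ) ^ T.card := by
    refine domPoly_induce G _ _ (fun x => ?_)
    simp
  have hG : domPoly G = ∑ T ∈ Finset.univ.powerset.filter (fun T => dominates G T),
      (X : Polynomial ℤ) ^ T.card := rfl
  set S1 := ∑ T ∈ Finset.univ.powerset.filter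
      (fun T : Finset V => dominates G T ∧ v ∈ T), (X : Polynomial ℤ) ^ T.card with hS1
  set S2 := ∑ T ∈ Finset.univ.powerset.filter
      (fun T : Finset V => dominates G T ∧ v ∉ T), (X : Polynomial ℤ) ^ T.card with hS2
  set Q := ∑ T ∈ Finset.univ.powerset.filter
      (fun T : Finset V => Finset.univ \ nbhd G T = {v}), (X : Polynomial ℤ) ^ T.card with hQ
  have hsplit : domPoly G = S1 + S2 := by
    rw [hG, ← Finset.sum_filter_add_sum_filter_not
      (Finset.univ.powerset.filter (fun T => dominates G T)) (fun T => v ∈ T),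
      Finset.filter_filter, Finset.filter_filter, hS1, hS2]
  have hGv2 : domPoly (G.induce {u : V | u ≠ v}) = S2 + Q := by
    rw [hGv, ← Finset.sum_filter_add_sum_filter_not
      ((Finset.univ.erase v).powerset.filter
        (fun T => ∀ x ∈ Finset.univ.erase v, x ∈ T ∨ ∃ u ∈ T, G.Adj u x))
      (fun T => v ∈ nbhd G T),
      Finset.filter_filter, Finset.filter_filter, hS2, hQ]
    congr 1
    · apply Finset.sum_congr _ (fun _ _ => rfl)
      ext T
      simp only [Finset.mem_filter, Finset.mem_powerset]
      constructor
      · rintro ⟨hsub, hdom, hvnb⟩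
        have hvT : v ∉ T := fun h => (Finset.mem_erase.1 (hsub h)).1 rfl
        refine ⟨Finset.subset_univ T, ?_, hvT⟩
        intro x
        by_cases hxv : x = v
        · subst hxv
          rcases (mem_nbhd G).1 hvnb with h | h
          · exact absurd h hvT
          · exact Or.inr h
        · exact hdom x (Finset.mem_erase.2 ⟨hxv, Finset.mem_univ x⟩)
      · rintro ⟨-, hdom, hvT⟩
        refine ⟨fun x hx => Finset.mem_erase.2 ⟨fun h => hvT (h ▸ hx), Finset.mem_univ x⟩,
          fun x _ => hdom x, ?_⟩
        rcases hdom v with h | h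
        · exact absurd h hvT
        · exact (mem_nbhd G).2 (Or.inr h)
    · apply Finset.sum_congr _ (fun _ _ => rfl)
      ext T
      simp only [Finset.mem_filter, Finset.mem_powerset]
      constructor
      · rintro ⟨hsub, hdom, hvnb⟩
        refine ⟨Finset.subset_univ T, ?_⟩
        ext x
        simp only [Finset.mem_sdiff, Finset.mem_univ, true_and, Finset.mem_singleton]
        constructor
        · intro hxn
          by_contra hxv
          exact hxn ((mem_nbhd G).2 (hdom x (Finset.mem_erase.2 ⟨hxv, Finset.mem_univ x⟩)))
        · rintro rfl; exact hvnb
      · rintro ⟨-, hA⟩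
        have hvnb : v ∉ nbhd G T := by
          have hm : v ∈ Finset.univ \ nbhd G T := by
            rw [hA]; exact Finset.mem_singleton_self v
          exact (Finset.mem_sdiff.1 hm).2
        refine ⟨?_, ?_, hvnb⟩
        · intro x hx
          refine Finset.mem_erase.2 ⟨?_, Finset.mem_univ x⟩
          rintro rfl
          exact hvnb (subset_nbhd G T hx)
        · intro x hx
          have hxv := (Finset.mem_erase.1 hx).1
          have hxnb : x ∈ nbhd G T := by
            by_contra hxn
            have hm : x ∈ Finset.univ \ nbhd G T :=
              Finset.mem_sdiff.2 ⟨Finset.mem_univ x, hxn⟩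
            rw [hA] at hm
            exact hxv (Finset.mem_singleton.1 hm)
          exact (mem_nbhd G).1 hxnb
  have hX : ∑ W ∈ (Finset.univ : Finset V).powerset.filter
        (fun W : Finset V => v ∈ W ∧ (G.induce (↑W : Set V)).Connected),
        (X : Polynomial ℤ) ^ W.card *
          ∑ S ∈ (Finset.univ \ nbhd G W).powerset.filter
            (fun S => ∀ x ∈ Finset.univ \ nbhd G W, x ∈ S ∨ ∃ u ∈ S, G.Adj u x),
            (X : Polynomial ℤ) ^ S.card
      = S1 := by
    have e1 : ∀ W : Finset V,
        (X : Polynomial ℤ) ^ W.card *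
          ∑ S ∈ (Finset.univ \ nbhd G W).powerset.filter
            (fun S => ∀ x ∈ Finset.univ \ nbhd G W, x ∈ S ∨ ∃ u ∈ S, G.Adj u x),
            (X : Polynomial ℤ) ^ S.card
        = ∑ S ∈ (Finset.univ \ nbhd G W).powerset,
            (if (∀ x ∈ Finset.univ \ nbhd G W, x ∈ S ∨ ∃ u ∈ S, G.Adj u x)
              then (X : Polynomial ℤ) ^ W.card * X ^ S.card else 0) := by
      intro W
      rw [Finset.mul_sum, Finset.sum_filter]
    rw [Finset.sum_congr rfl (fun W _ => e1 W),
      sum_pair G v Finset.univ (fun W S =>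
        if (∀ x ∈ Finset.univ \ nbhd G W, x ∈ S ∨ ∃ u ∈ S, G.Adj u x)
          then (X : Polynomial ℤ) ^ W.card * X ^ S.card else 0)]
    have e2 : ∀ T ∈ (Finset.univ : Finset V).powerset.filter (fun T => v ∈ T),
        (if (∀ x ∈ Finset.univ \ nbhd G (comp G v T),
            x ∈ T \ comp G v T ∨ ∃ u ∈ T \ comp G v T, G.Adj u x)
          then (X : Polynomial ℤ) ^ (comp G v T).card * X ^ (T \ comp G v T).card else 0)
        = (if dominates G T then (X : Polynomial ℤ) ^ T.card else 0) := by
      intro T hT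
      simp only [Finset.mem_filter] at hT
      have hvT : v ∈ T := hT.2
      have hpow : (X : Polynomial ℤ) ^ (comp G v T).card * X ^ (T \ comp G v T).card
          = X ^ T.card := by
        have hcc := Finset.card_sdiff_add_card_eq_card (comp_subset G v T)
        rw [← pow_add]
        congr 1
        omega
      rw [hpow]
      exact if_congr (dom_split G v hvT).symm rfl rfl
    rw [Finset.sum_congr rfl e2, ← Finset.sum_filter, Finset.filter_filter, hS1]
    apply Finset.sum_congr _ (fun _ _ => rfl)
    ext T
    simp only [Finset.mem_filter, Finset.mem_powerset]
    tauto
  have hSgn : ∑ W ∈ (Finset.univ : Finset V).powerset.filter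
        (fun W : Finset V => v ∈ W ∧ (G.induce (↑W : Set V)).Connected),
        (-1 : Polynomial ℤ) ^ W.card *
          ∑ S ∈ (Finset.univ \ nbhd G W).powerset.filter
            (fun S => ∀ x ∈ Finset.univ \ nbhd G W, x ∈ S ∨ ∃ u ∈ S, G.Adj u x),
            (X : Polynomial ℤ) ^ S.card
      = -Q := by
    have e1 : ∀ W : Finset V,
        (-1 : Polynomial ℤ) ^ W.card *
          ∑ S ∈ (Finset.univ \ nbhd G W).powerset.filter
            (fun S => ∀ x ∈ Finset.univ \ nbhd G W, x ∈ S ∨ ∃ u ∈ S, G.Adj u x),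
            (X : Polynomial ℤ) ^ S.card
        = ∑ S ∈ (Finset.univ : Finset V).powerset,
            (if S ⊆ Finset.univ \ nbhd G W ∧
                (∀ x ∈ Finset.univ \ nbhd G W, x ∈ S ∨ ∃ u ∈ S, G.Adj u x)
              then (-1 : Polynomial ℤ) ^ W.card * X ^ S.card else 0) := by
      intro W
      rw [Finset.mul_sum,
        sum_powerset_extend (Finset.univ \ nbhd G W) _
          (fun S => (-1 : Polynomial ℤ) ^ W.card * X ^ S.card)]
    rw [Finset.sum_congr rfl (fun W _ => e1 W), Finset.sum_comm]
    have e3 : ∀ S ∈ (Finset.univ : Finset V).powerset,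
        (∑ W ∈ (Finset.univ : Finset V).powerset.filter
            (fun W : Finset V => v ∈ W ∧ (G.induce (↑W : Set V)).Connected),
          if S ⊆ Finset.univ \ nbhd G W ∧
              (∀ x ∈ Finset.univ \ nbhd G W, x ∈ S ∨ ∃ u ∈ S, G.Adj u x)
            then (-1 : Polynomial ℤ) ^ W.card * X ^ S.card else 0)
        = (if Finset.univ \ nbhd G S = {v} then -(X : Polynomial ℤ) ^ S.card else 0) := by
      intro S _
      have hstep : ∀ W ∈ (Finset.univ : Finset V).powerset.filter
          (fun W : Finset V => v ∈ W ∧ (G.induce (↑W : Set V)).Connected),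
          (if S ⊆ Finset.univ \ nbhd G W ∧
              (∀ x ∈ Finset.univ \ nbhd G W, x ∈ S ∨ ∃ u ∈ S, G.Adj u x)
            then (-1 : Polynomial ℤ) ^ W.card * X ^ S.card else 0)
          = (if W ⊆ Finset.univ \ nbhd G S ∧
              (v ∈ W ∧ (G.induce (↑W : Set V)).Connected ∧
                Finset.univ \ nbhd G S ⊆ nbhd G W)
              then (-1 : Polynomial ℤ) ^ W.card else 0) * X ^ S.card := by
        intro W hW
        simp only [Finset.mem_filter] at hW
        rw [ite_mul, zero_mul]
        refine if_congr ?_ rfl rfl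
        constructor
        · rintro ⟨h1, h2⟩
          exact ⟨cond_subset_aux G h1, hW.2.1, hW.2.2, (cond_dom_iff G).1 h2⟩
        · rintro ⟨h1, -, -, h2⟩
          exact ⟨cond_subset_aux G h1, (cond_dom_iff G).2 h2⟩
      rw [Finset.sum_congr rfl hstep, ← Finset.sum_mul]
      have e4 : (∑ W ∈ (Finset.univ : Finset V).powerset.filter
            (fun W : Finset V => v ∈ W ∧ (G.induce (↑W : Set V)).Connected),
          if W ⊆ Finset.univ \ nbhd G S ∧
              (v ∈ W ∧ (G.induce (↑W : Set V)).Connected ∧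
                Finset.univ \ nbhd G S ⊆ nbhd G W)
            then (-1 : Polynomial ℤ) ^ W.card else 0)
          = (if Finset.univ \ nbhd G S = {v} then (-1 : Polynomial ℤ) else 0) := by
        rw [Finset.sum_subset (Finset.filter_subset _ _)
          (fun W hW hWn => if_neg (fun hcond => hWn
            (by simp only [Finset.mem_filter]; exact ⟨hW, hcond.2.1, hcond.2.2.1⟩))),
          ← sum_powerset_extend (Finset.univ \ nbhd G S)
            (fun W : Finset V => v ∈ W ∧ (G.induce (↑W : Set V)).Connected ∧
              Finset.univ \ nbhd G S ⊆ nbhd G W)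
            (fun W => (-1 : Polynomial ℤ) ^ W.card),
          key G v (Finset.univ \ nbhd G S)]
      rw [e4]
      by_cases hA : Finset.univ \ nbhd G S = {v}
      · rw [if_pos hA, if_pos hA]; ring
      · rw [if_neg hA, if_neg hA]; ring
    rw [Finset.sum_congr rfl e3, ← Finset.sum_filter, hQ, ← Finset.sum_neg_distrib]
  have hRHS : ∑ W ∈ (Finset.univ : Finset V).powerset.filter
        (fun W : Finset V => v ∈ W ∧ (G.induce (↑W : Set V)).Connected),
        ((X : Polynomial ℤ) ^ W.card + (-1) ^ W.card) *
          domPoly (G.induce {x : V | ¬ (x ∈ W ∨ ∃ u ∈ W, G.Adj u x)})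
      = S1 + -Q := by
    rw [Finset.sum_congr rfl (fun W _ => by rw [hDW W, add_mul]), Finset.sum_add_distrib,
      hX, hSgn]
  rw [hsplit, hGv2, hRHS]
  ring
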